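/- (Robust alternative theorem.) Let A, B₁, B₂ be real symmetric n×n matrices, a, b₁, b₂ ∈ ℝ^n, and γ, α, β, μ₁, μ₂, δ₁, δ₂ ∈ ℝ with μ₁ ≤ μ₂, δ₁ ≤ δ₂ and α < β. Assume that the set Ω_W is convex. Then exactly one of the following two assertions holds: (a) there exists x ∈ ℝ^n such that ½xᵀAx + aᵀx + γ < 0 and α < ½xᵀ(B₁+μB₂)x + (b₁+δb₂)ᵀx < β for all μ ∈ [μ₁,μ₂] and all δ ∈ [δ₁,δ₂]; (b) there exist (λ₀,λ₁,λ₂) ∈ ℝ³₊ \ {0}, μ_α, μ_β ∈ [μ₁,μ₂] with μ_α + μ_β = μ₁ + μ₂, and δ_α, δ_β ∈ [δ₁,δ₂] such that for all x ∈ ℝ^n: λ₀(½xᵀAx + aᵀx + γ) + λ₁(½xᵀ(B₁+μ_βB₂)x + (b₁+δ_βb₂)ᵀx − β) + λ₂(α − (½xᵀ(B₁+μ_αB₂)x + (b₁+δ_αb₂)ᵀx)) ≥ 0. -/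

import Mathlib

open Matrix Set Pointwise

/-- The set `Ω_W ⊆ ℝ⁵`: the Minkowski sum of the image of `y = (x,t) ∈ ℝ^{n+1}` under the
five quadratic forms `½yᵀH₀y`, `max_{μ∈[μ₁,μ₂]} ½yᵀ(W_{1β}+μW₂)y`,
`max_{μ∈[μ₁,μ₂]} ½yᵀ(W_{2β}+μW₂)y`, `−min_{μ∈[μ₁,μ₂]} ½yᵀ(W_{1α}+μW₂)y`,
`−min_{μ∈[μ₁,μ₂]} ½yᵀ(W_{2α}+μW₂)y` with the open positive orthant of `ℝ⁵`. -/
noncomputable def OmegaW (n : ℕ) (A B₁ B₂ : Matrix (Fin n) (Fin n) ℝ)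
    (a b₁ b₂ : Fin n → ℝ) (γ α β μ₁ μ₂ δ₁ δ₂ : ℝ) : Set (Fin 5 → ℝ) :=
  (Set.range (fun y : (Fin n → ℝ) × ℝ =>
    ![(1 / 2) * (y.1 ⬝ᵥ (A *ᵥ y.1)) + y.2 * (a ⬝ᵥ y.1) + γ * y.2 ^ 2,
      sSup ((fun μ => (1 / 2) * (y.1 ⬝ᵥ ((B₁ + μ • B₂) *ᵥ y.1))
        + y.2 * ((b₁ + δ₁ • b₂) ⬝ᵥ y.1) - β * y.2 ^ 2) '' Icc μ₁ μ₂),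
      sSup ((fun μ => (1 / 2) * (y.1 ⬝ᵥ ((B₁ + μ • B₂) *ᵥ y.1))
        + y.2 * ((b₁ + δ₂ • b₂) ⬝ᵥ y.1) - β * y.2 ^ 2) '' Icc μ₁ μ₂),
      -sInf ((fun μ => (1 / 2) * (y.1 ⬝ᵥ ((B₁ + μ • B₂) *ᵥ y.1))
        + y.2 * ((b₁ + δ₁ • b₂) ⬝ᵥ y.1) - α * y.2 ^ 2) '' Icc μ₁ μ₂),
      -sInf ((fun μ => (1 / 2) * (y.1 ⬝ᵥ ((B₁ + μ • B₂) *ᵥ y.1))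
        + y.2 * ((b₁ + δ₂ • b₂) ⬝ᵥ y.1) - α * y.2 ^ 2) '' Icc μ₁ μ₂)]))
  + {z : Fin 5 → ℝ | ∀ i, 0 < z i}

private lemma aux_nonneg {r g : ℝ} (h : ∀ ε > (0:ℝ), 0 < r + ε * g) : 0 ≤ r := by
  rcases le_or_gt g 0 with hg | hg
  · have h1 := h 1 one_pos
    nlinarith
  · by_contra hr
    push_neg at hr
    have hε : (0:ℝ) < -r / (2 * g) := by
      apply div_pos (by linarith) (by linarith)
    have := h _ hε
    have : r + (-r / (2*g)) * g = r/2 := by field_simp; ring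
    nlinarith [h _ hε]

private lemma aux_sSup_affine {f : ℝ → ℝ} {c d lo hi : ℝ} (h : lo ≤ hi)
    (hf : ∀ μ, f μ = c + μ * d) :
    sSup (f '' Icc lo hi) = max (f lo) (f hi) := by
  apply IsGreatest.csSup_eq
  constructor
  · rcases max_cases (f lo) (f hi) with ⟨he, _⟩ | ⟨he, _⟩ <;> rw [he]
    · exact ⟨lo, ⟨le_refl _, h⟩, rfl⟩
    · exact ⟨hi, ⟨h, le_refl _⟩, rfl⟩
  · rintro _ ⟨μ, ⟨h1, h2⟩, rfl⟩
    rcases le_or_gt 0 d with hd | hd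
    · refine le_trans ?_ (le_max_right _ _)
      rw [hf, hf]; nlinarith
    · refine le_trans ?_ (le_max_left _ _)
      rw [hf, hf]; nlinarith

private lemma aux_sInf_affine {f : ℝ → ℝ} {c d lo hi : ℝ} (h : lo ≤ hi)
    (hf : ∀ μ, f μ = c + μ * d) :
    sInf (f '' Icc lo hi) = min (f lo) (f hi) := by
  apply IsLeast.csInf_eq
  constructor
  · rcases min_cases (f lo) (f hi) with ⟨he, _⟩ | ⟨he, _⟩ <;> rw [he]
    · exact ⟨lo, ⟨le_refl _, h⟩, rfl⟩
    · exact ⟨hi, ⟨h, le_refl _⟩, rfl⟩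
  · rintro _ ⟨μ, ⟨h1, h2⟩, rfl⟩
    rcases le_or_gt 0 d with hd | hd
    · refine le_trans (min_le_left _ _) ?_
      rw [hf, hf]; nlinarith
    · refine le_trans (min_le_right _ _) ?_
      rw [hf, hf]; nlinarith

/-- affine interpolation of strict upper bounds -/
private lemma aux_affine_lt {c d r lo hi v : ℝ} (h1 : lo ≤ v) (h2 : v ≤ hi)
    (ha : c + lo * d < r) (hb : c + hi * d < r) : c + v * d < r := by
  rcases le_or_gt 0 d with hd | hd
  · nlinarith
  · nlinarith

private lemma aux_affine_gt {c d r lo hi v : ℝ} (h1 : lo ≤ v) (h2 : v ≤ hi)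
    (ha : r < c + lo * d) (hb : r < c + hi * d) : r < c + v * d := by
  rcases le_or_gt 0 d with hd | hd
  · nlinarith
  · nlinarith

private lemma aux_root {su sp sw : ℝ} (hu : 0 < su) (hw : sw < 0) :
    ∃ c ∈ Ioo (0:ℝ) 1, (1-c)^2 * su + (1-c)*c*sp + c^2 * sw = 0 := by
  set f : ℝ → ℝ := fun c => (1-c)^2 * su + (1-c)*c*sp + c^2 * sw with hf
  have hcont : ContinuousOn f (Icc (0:ℝ) 1) := by fun_prop
  have h0 : f 0 = su := by simp [hf]
  have h1 : f 1 = sw := by simp [hf]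
  have := intermediate_value_Ioo' (by norm_num : (0:ℝ) ≤ 1) hcont
    (show (0:ℝ) ∈ Ioo (f 1) (f 0) by rw [h0, h1]; exact ⟨hw, hu⟩)
  obtain ⟨c, hc, hfc⟩ := this
  exact ⟨c, hc, hfc⟩

private lemma aux_cross {E : Type*} [AddCommGroup E] [Module ℝ E]
    (N s : E → ℝ)
    (hquad : ∀ u w : E, ∃ np sp : ℝ, ∀ a b : ℝ,
      N (a • u + b • w) = a^2 * N u + a*b*np + b^2 * N w ∧
      s (a • u + b • w) = a^2 * s u + a*b*sp + b^2 * s w)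
    (hzero : ∀ y, s y ≤ 0 → 0 ≤ N y)
    {u w : E} (hu : 0 < s u) (hw : s w < 0) :
    N u * s w ≤ N w * s u := by
  obtain ⟨np, sp, h⟩ := hquad u w
  obtain ⟨c₁, hc₁, hr₁⟩ := aux_root (sp := sp) hu hw
  obtain ⟨c₂, hc₂, hr₂⟩ := aux_root (sp := -sp) hu hw
  have hp1 : 0 < 1 - c₁ := by linarith [hc₁.2]
  have hq1 : 0 < c₁ := hc₁.1
  have hp2 : 0 < 1 - c₂ := by linarith [hc₂.2]
  have hq2 : 0 < c₂ := hc₂.1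
  set p1 := 1 - c₁
  set q1 := c₁
  set p2 := 1 - c₂
  set q2 := c₂
  -- point on path 1 where s vanishes
  have hs1 : s (p1 • u + q1 • w) = 0 := by
    rw [(h p1 q1).2]; linear_combination hr₁
  have hN1 : 0 ≤ N (p1 • u + q1 • w) := hzero _ (le_of_eq hs1)
  have I1 : 0 ≤ p1^2 * N u + p1*q1*np + q1^2 * N w := by
    rw [← (h p1 q1).1]; exact hN1
  -- point on path 2 (through -w) where s vanishes
  have hs2 : s (p2 • u + (-q2) • w) = 0 := by
    rw [(h p2 (-q2)).2]; linear_combination hr₂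
  have hN2 : 0 ≤ N (p2 • u + (-q2) • w) := hzero _ (le_of_eq hs2)
  have I2 : 0 ≤ p2^2 * N u - p2*q2*np + q2^2 * N w := by
    have e : N (p2 • u + (-q2) • w) = p2^2 * N u - p2*q2*np + q2^2 * N w := by
      rw [(h p2 (-q2)).1]; ring
    rw [← e]; exact hN2
  have E1 : p1^2 * s u + p1*q1*sp + q1^2 * s w = 0 := hr₁
  have E2 : p2^2 * s u - p2*q2*sp + q2^2 * s w = 0 := by linear_combination hr₂
  have hden : 0 < p1*q2 + p2*q1 := by positivity
  have keyE : (p1*q2 + p2*q1) * (s u * (p1*p2) + s w * (q1*q2)) = 0 := by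
    linear_combination (p2*q2) * E1 + (p1*q1) * E2
  have hE : s u * (p1*p2) + s w * (q1*q2) = 0 := by
    rcases mul_eq_zero.mp keyE with h' | h'
    · exact absurd h' (ne_of_gt hden)
    · exact h'
  have keyI : 0 ≤ (p1*q2 + p2*q1) * (N u * (p1*p2) + N w * (q1*q2)) := by
    have e : (p1*q2 + p2*q1) * (N u * (p1*p2) + N w * (q1*q2))
        = p2*q2*(p1^2 * N u + p1*q1*np + q1^2 * N w)
          + p1*q1*(p2^2 * N u - p2*q2*np + q2^2 * N w) := by ring
    rw [e]
    exact add_nonneg (mul_nonneg (mul_pos hp2 hq2).le I1)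
      (mul_nonneg (mul_pos hp1 hq1).le I2)
  have hI : 0 ≤ N u * (p1*p2) + N w * (q1*q2) := by
    by_contra h'
    push_neg at h'
    exact absurd keyI (not_le.mpr (mul_neg_of_pos_of_neg hden h'))
  have h5 : 0 ≤ (N u * (p1*p2) + N w * (q1*q2)) * s u := mul_nonneg hI hu.le
  have h6 : N u * (s u * (p1*p2) + s w * (q1*q2)) = 0 := by rw [hE]; ring
  have h7 : 0 ≤ (q1*q2) * (N w * s u - N u * s w) := by nlinarith [h5, h6]
  by_contra hcon
  push_neg at hcon
  exact absurd h7 (not_le.mpr (mul_neg_of_pos_of_neg (mul_pos hq1 hq2) (by linarith)))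

/-- Structured Yuan-type lemma. -/
private lemma aux_yuan {E : Type*} [AddCommGroup E] [Module ℝ E]
    (N P s : E → ℝ) (K : ℝ) (hK : 0 ≤ K)
    (hquad : ∀ u w : E, ∃ np sp : ℝ, ∀ a b : ℝ,
      N (a • u + b • w) = a^2 * N u + a*b*np + b^2 * N w ∧
      s (a • u + b • w) = a^2 * s u + a*b*sp + b^2 * s w)
    (hPN : ∀ y, P y = N y + K * s y)
    (hP : ∀ y, 0 ≤ s y → 0 ≤ P y)
    (hN : ∀ y, s y ≤ 0 → 0 ≤ N y) :
    ∃ t ∈ Icc (0:ℝ) 1, ∀ y, 0 ≤ (1-t) * N y + t * P y := by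
  by_cases hex : ∃ u, 0 < s u
  · obtain ⟨u, hu⟩ := hex
    by_cases hex' : ∃ w, s w < 0
    · obtain ⟨w, hw⟩ := hex'
      rcases eq_or_lt_of_le hK with hK0 | hKpos
      · refine ⟨0, ⟨le_refl _, zero_le_one⟩, fun y => ?_⟩
        simp only [sub_zero, one_mul, zero_mul, add_zero]
        rcases le_or_gt (s y) 0 with h' | h'
        · exact hN y h'
        · have := hP y h'.le
          rw [hPN y, ← hK0] at this; linarith
      · -- K > 0
        set S : Set ℝ := {r : ℝ | ∃ y, 0 < s y ∧ r = -(N y) / (K * s y)} with hS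
        have hne : S.Nonempty := ⟨_, u, hu, rfl⟩
        have hbdd1 : ∀ r ∈ S, r ≤ 1 := by
          rintro _ ⟨y, hy, rfl⟩
          have hPy := hP y hy.le
          rw [hPN y] at hPy
          rw [div_le_one (mul_pos hKpos hy)]
          nlinarith
        have hbddA : BddAbove S := ⟨1, hbdd1⟩
        set t0 := sSup S with ht0
        set t := max t0 0 with ht
        have ht1 : t ≤ 1 := by
          apply max_le _ zero_le_one
          exact csSup_le hne hbdd1
        refine ⟨t, ⟨le_max_right _ _, ht1⟩, fun y => ?_⟩
        have hrw : (1-t) * N y + t * P y = N y + t * (K * s y) := by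
          rw [hPN y]; ring
        rw [hrw]
        rcases lt_trichotomy (s y) 0 with hy | hy | hy
        · -- need t ≤ N y / (K * (- s y))
          have hNy := hN y hy.le
          have hub : t ≤ N y / (K * (- s y)) := by
            apply max_le
            · apply csSup_le hne
              rintro _ ⟨z, hz, rfl⟩
              rw [div_le_div_iff₀ (mul_pos hKpos hz) (mul_pos hKpos (neg_pos.mpr hy))]
              have hcross := aux_cross N s hquad hN hz hy
              nlinarith
            · exact div_nonneg hNy (mul_pos hKpos (neg_pos.mpr hy)).le
          rw [le_div_iff₀ (mul_pos hKpos (neg_pos.mpr hy))] at hub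
          nlinarith
        · have := hN y (le_of_eq hy)
          rw [hy]; linarith
        · have hlb : -(N y) / (K * s y) ≤ t := by
            refine le_trans (le_csSup hbddA ⟨y, hy, rfl⟩) (le_max_left _ _)
          rw [div_le_iff₀ (mul_pos hKpos hy)] at hlb
          nlinarith
    · push_neg at hex'
      refine ⟨1, ⟨zero_le_one, le_refl _⟩, fun y => ?_⟩
      have := hP y (hex' y)
      simp only [sub_self, zero_mul, one_mul, zero_add]
      linarith
  · push_neg at hex
    refine ⟨0, ⟨le_refl _, zero_le_one⟩, fun y => ?_⟩
    have := hN y (hex y)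
    simp only [sub_zero, one_mul, zero_mul, add_zero]
    linarith

private noncomputable def qf {n : ℕ} (M : Matrix (Fin n) (Fin n) ℝ) (v : Fin n → ℝ) (c : ℝ)
    (y : (Fin n → ℝ) × ℝ) : ℝ :=
  (1/2) * (y.1 ⬝ᵥ (M *ᵥ y.1)) + y.2 * (v ⬝ᵥ y.1) + c * y.2^2

private lemma qf_expand {n : ℕ} (M : Matrix (Fin n) (Fin n) ℝ) (v : Fin n → ℝ) (c : ℝ)
    (u w : (Fin n → ℝ) × ℝ) (a b : ℝ) :
    qf M v c (a • u + b • w) = a^2 * qf M v c u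
      + a*b*((1/2) * (u.1 ⬝ᵥ (M *ᵥ w.1)) + (1/2) * (w.1 ⬝ᵥ (M *ᵥ u.1))
          + u.2 * (v ⬝ᵥ w.1) + w.2 * (v ⬝ᵥ u.1) + 2*c*u.2*w.2)
      + b^2 * qf M v c w := by
  simp only [qf, Prod.fst_add, Prod.snd_add, Prod.smul_fst, Prod.smul_snd,
    Matrix.mulVec_add, Matrix.mulVec_smul, dotProduct_add, add_dotProduct,
    dotProduct_smul, smul_dotProduct, smul_eq_mul]
  ring

private lemma qf_scale {n : ℕ} (M : Matrix (Fin n) (Fin n) ℝ) (v : Fin n → ℝ) (c : ℝ)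
    (y : (Fin n → ℝ) × ℝ) (ht : y.2 ≠ 0) :
    qf M v c (y.2⁻¹ • y.1, 1) = (y.2⁻¹)^2 * qf M v c y := by
  simp only [qf, Matrix.mulVec_smul, dotProduct_smul, smul_dotProduct, smul_eq_mul]
  field_simp

private lemma qf_affine_mu {n : ℕ} (B₁ B₂ : Matrix (Fin n) (Fin n) ℝ) (vv : Fin n → ℝ)
    (c μ : ℝ) (y : (Fin n → ℝ) × ℝ) :
    qf (B₁ + μ • B₂) vv c y = qf B₁ vv c y + μ * ((1/2) * (y.1 ⬝ᵥ (B₂ *ᵥ y.1))) := by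
  simp only [qf, Matrix.add_mulVec, Matrix.smul_mulVec, dotProduct_add,
    dotProduct_smul, smul_eq_mul]
  ring

private lemma qf_affine_delta {n : ℕ} (M : Matrix (Fin n) (Fin n) ℝ) (b₁ b₂ : Fin n → ℝ)
    (c δ : ℝ) (y : (Fin n → ℝ) × ℝ) :
    qf M (b₁ + δ • b₂) c y = qf M b₁ c y + δ * (y.2 * (b₂ ⬝ᵥ y.1)) := by
  simp only [qf, add_dotProduct, smul_dotProduct, smul_eq_mul]
  ring

set_option maxHeartbeats 4000000 in
/-- Theorem 1, a robust alternative result. -/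
theorem robust_alternative (n : ℕ) (A B₁ B₂ : Matrix (Fin n) (Fin n) ℝ)
    (a b₁ b₂ : Fin n → ℝ) (γ α β μ₁ μ₂ δ₁ δ₂ : ℝ)
    (hA : A.IsSymm) (hB₁ : B₁.IsSymm) (hB₂ : B₂.IsSymm)
    (hμ : μ₁ ≤ μ₂) (hδ : δ₁ ≤ δ₂) (hαβ : α < β)
    (hconv : Convex ℝ (OmegaW n A B₁ B₂ a b₁ b₂ γ α β μ₁ μ₂ δ₁ δ₂)) :
    Xor'
      (∃ x : Fin n → ℝ,
        (1 / 2) * (x ⬝ᵥ (A *ᵥ x)) + a ⬝ᵥ x + γ < 0 ∧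
        ∀ μ ∈ Icc μ₁ μ₂, ∀ δ ∈ Icc δ₁ δ₂,
          α < (1 / 2) * (x ⬝ᵥ ((B₁ + μ • B₂) *ᵥ x)) + (b₁ + δ • b₂) ⬝ᵥ x ∧
          (1 / 2) * (x ⬝ᵥ ((B₁ + μ • B₂) *ᵥ x)) + (b₁ + δ • b₂) ⬝ᵥ x < β)
      (∃ lam : Fin 3 → ℝ, (∀ i, 0 ≤ lam i) ∧ lam ≠ 0 ∧
        ∃ μa ∈ Icc μ₁ μ₂, ∃ μb ∈ Icc μ₁ μ₂,
        ∃ δa ∈ Icc δ₁ δ₂, ∃ δb ∈ Icc δ₁ δ₂,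
          μa + μb = μ₁ + μ₂ ∧
          ∀ x : Fin n → ℝ,
            lam 0 * ((1 / 2) * (x ⬝ᵥ (A *ᵥ x)) + a ⬝ᵥ x + γ) +
            lam 1 * ((1 / 2) * (x ⬝ᵥ ((B₁ + μb • B₂) *ᵥ x)) + (b₁ + δb • b₂) ⬝ᵥ x - β) +
            lam 2 * (α - ((1 / 2) * (x ⬝ᵥ ((B₁ + μa • B₂) *ᵥ x)) + (b₁ + δa • b₂) ⬝ᵥ x))
              ≥ 0) := by
  by_cases hEx : (∃ x : Fin n → ℝ,
        (1 / 2) * (x ⬝ᵥ (A *ᵥ x)) + a ⬝ᵥ x + γ < 0 ∧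
        ∀ μ ∈ Icc μ₁ μ₂, ∀ δ ∈ Icc δ₁ δ₂,
          α < (1 / 2) * (x ⬝ᵥ ((B₁ + μ • B₂) *ᵥ x)) + (b₁ + δ • b₂) ⬝ᵥ x ∧
          (1 / 2) * (x ⬝ᵥ ((B₁ + μ • B₂) *ᵥ x)) + (b₁ + δ • b₂) ⬝ᵥ x < β)
  · -- (a) holds; show (b) fails
    refine Or.inl ⟨hEx, ?_⟩
    rintro ⟨lam, hlam, hlamne, μa, hμa, μb, hμb, δa, hδa, δb, hδb, hsum, hineq⟩
    obtain ⟨x, hx0, hxq⟩ := hEx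
    have hb := hxq μb hμb δb hδb
    have ha := hxq μa hμa δa hδa
    have h := hineq x
    set t0 := (1 / 2) * (x ⬝ᵥ (A *ᵥ x)) + a ⬝ᵥ x + γ with ht0
    set t1 := (1 / 2) * (x ⬝ᵥ ((B₁ + μb • B₂) *ᵥ x)) + (b₁ + δb • b₂) ⬝ᵥ x - β with ht1
    set t2 := α - ((1 / 2) * (x ⬝ᵥ ((B₁ + μa • B₂) *ᵥ x)) + (b₁ + δa • b₂) ⬝ᵥ x) with ht2
    have hlt0 : t0 < 0 := hx0
    have hlt1 : t1 < 0 := by rw [ht1]; linarith [hb.2]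
    have hlt2 : t2 < 0 := by rw [ht2]; linarith [ha.1]
    have p0 : lam 0 * t0 ≤ 0 := mul_nonpos_of_nonneg_of_nonpos (hlam 0) hlt0.le
    have p1 : lam 1 * t1 ≤ 0 := mul_nonpos_of_nonneg_of_nonpos (hlam 1) hlt1.le
    have p2 : lam 2 * t2 ≤ 0 := mul_nonpos_of_nonneg_of_nonpos (hlam 2) hlt2.le
    have e0 : lam 0 = 0 := by
      have : lam 0 * t0 = 0 := le_antisymm p0 (by linarith)
      rcases mul_eq_zero.mp this with h' | h'
      · exact h'
      · exact absurd h' (ne_of_lt hlt0)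
    have e1 : lam 1 = 0 := by
      have : lam 1 * t1 = 0 := le_antisymm p1 (by linarith)
      rcases mul_eq_zero.mp this with h' | h'
      · exact h'
      · exact absurd h' (ne_of_lt hlt1)
    have e2 : lam 2 = 0 := by
      have : lam 2 * t2 = 0 := le_antisymm p2 (by linarith)
      rcases mul_eq_zero.mp this with h' | h'
      · exact h'
      · exact absurd h' (ne_of_lt hlt2)
    apply hlamne
    funext i
    fin_cases i
    · exact e0
    · exact e1
    · exact e2
  · refine Or.inr ⟨?_, hEx⟩
    -- main direction: ¬(a) ⟹ (b)
    set sfn : ((Fin n → ℝ) × ℝ) → ℝ := fun y => (1/2) * (y.1 ⬝ᵥ (B₂ *ᵥ y.1)) with hsfn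
    set Q : ℝ → ℝ → ℝ → ((Fin n → ℝ) × ℝ) → ℝ :=
      fun μ δ c y => qf (B₁ + μ • B₂) (b₁ + δ • b₂) c y with hQ
    set vmap : ((Fin n → ℝ) × ℝ) → (Fin 5 → ℝ) := fun y =>
      ![(1 / 2) * (y.1 ⬝ᵥ (A *ᵥ y.1)) + y.2 * (a ⬝ᵥ y.1) + γ * y.2 ^ 2,
        sSup ((fun μ => (1 / 2) * (y.1 ⬝ᵥ ((B₁ + μ • B₂) *ᵥ y.1))
          + y.2 * ((b₁ + δ₁ • b₂) ⬝ᵥ y.1) - β * y.2 ^ 2) '' Icc μ₁ μ₂),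
        sSup ((fun μ => (1 / 2) * (y.1 ⬝ᵥ ((B₁ + μ • B₂) *ᵥ y.1))
          + y.2 * ((b₁ + δ₂ • b₂) ⬝ᵥ y.1) - β * y.2 ^ 2) '' Icc μ₁ μ₂),
        -sInf ((fun μ => (1 / 2) * (y.1 ⬝ᵥ ((B₁ + μ • B₂) *ᵥ y.1))
          + y.2 * ((b₁ + δ₁ • b₂) ⬝ᵥ y.1) - α * y.2 ^ 2) '' Icc μ₁ μ₂),
        -sInf ((fun μ => (1 / 2) * (y.1 ⬝ᵥ ((B₁ + μ • B₂) *ᵥ y.1))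
          + y.2 * ((b₁ + δ₂ • b₂) ⬝ᵥ y.1) - α * y.2 ^ 2) '' Icc μ₁ μ₂)] with hvmap
    have hΩ : OmegaW n A B₁ B₂ a b₁ b₂ γ α β μ₁ μ₂ δ₁ δ₂
        = Set.range vmap + {z : Fin 5 → ℝ | ∀ i, 0 < z i} := rfl
    -- component computations
    have hv0 : ∀ y, vmap y 0 = qf A a γ y := by
      intro y; rw [hvmap]; simp [Matrix.cons_val_zero, qf]
    have hv1 : ∀ y (δ : ℝ),
        sSup ((fun μ => (1 / 2) * (y.1 ⬝ᵥ ((B₁ + μ • B₂) *ᵥ y.1))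
          + y.2 * ((b₁ + δ • b₂) ⬝ᵥ y.1) - β * y.2 ^ 2) '' Icc μ₁ μ₂)
        = max (Q μ₁ δ (-β) y) (Q μ₂ δ (-β) y) := by
      intro y δ
      have hf : ∀ μ : ℝ, (1 / 2) * (y.1 ⬝ᵥ ((B₁ + μ • B₂) *ᵥ y.1))
          + y.2 * ((b₁ + δ • b₂) ⬝ᵥ y.1) - β * y.2 ^ 2
          = (qf B₁ (b₁ + δ • b₂) (-β) y) + μ * sfn y := by
        intro μ
        simp only [qf, hsfn, Matrix.add_mulVec, Matrix.smul_mulVec, dotProduct_add,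
          dotProduct_smul, smul_eq_mul]
        ring
      rw [aux_sSup_affine hμ hf]
      congr 1
      · rw [hf μ₁]; simp only [hQ, hsfn]; rw [qf_affine_mu]
      · rw [hf μ₂]; simp only [hQ, hsfn]; rw [qf_affine_mu]
    have hv3 : ∀ y (δ : ℝ),
        sInf ((fun μ => (1 / 2) * (y.1 ⬝ᵥ ((B₁ + μ • B₂) *ᵥ y.1))
          + y.2 * ((b₁ + δ • b₂) ⬝ᵥ y.1) - α * y.2 ^ 2) '' Icc μ₁ μ₂)
        = min (Q μ₁ δ (-α) y) (Q μ₂ δ (-α) y) := by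
      intro y δ
      have hf : ∀ μ : ℝ, (1 / 2) * (y.1 ⬝ᵥ ((B₁ + μ • B₂) *ᵥ y.1))
          + y.2 * ((b₁ + δ • b₂) ⬝ᵥ y.1) - α * y.2 ^ 2
          = (qf B₁ (b₁ + δ • b₂) (-α) y) + μ * sfn y := by
        intro μ
        simp only [qf, hsfn, Matrix.add_mulVec, Matrix.smul_mulVec, dotProduct_add,
          dotProduct_smul, smul_eq_mul]
        ring
      rw [aux_sInf_affine hμ hf]
      congr 1
      · rw [hf μ₁]; simp only [hQ, hsfn]; rw [qf_affine_mu]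
      · rw [hf μ₂]; simp only [hQ, hsfn]; rw [qf_affine_mu]
    -- 0 is not in OmegaW
    have h0notin : (0 : Fin 5 → ℝ) ∉ OmegaW n A B₁ B₂ a b₁ b₂ γ α β μ₁ μ₂ δ₁ δ₂ := by
      intro h0
      rw [hΩ, Set.mem_add] at h0
      obtain ⟨p, ⟨y, rfl⟩, z, hz, hpz⟩ := h0
      have hneg : ∀ i, vmap y i < 0 := by
        intro i
        have h1 := congrFun hpz i
        have h2 := hz i
        simp only [Pi.add_apply, Pi.zero_apply] at h1
        linarith
      have c0 : qf A a γ y < 0 := by rw [← hv0 y]; exact hneg 0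
      have cβ1 : Q μ₁ δ₁ (-β) y < 0 ∧ Q μ₂ δ₁ (-β) y < 0 := by
        have := hneg 1
        rw [hvmap] at this
        simp only [Matrix.cons_val_one, Matrix.head_cons] at this
        rw [hv1 y δ₁] at this
        exact max_lt_iff.mp this
      have cβ2 : Q μ₁ δ₂ (-β) y < 0 ∧ Q μ₂ δ₂ (-β) y < 0 := by
        have := hneg 2
        rw [hvmap] at this
        simp only [show ((2:Fin 5)) = ((1:Fin 4)).succ from rfl] at this
        simp only [Matrix.cons_val_succ, Matrix.cons_val_one, Matrix.head_cons] at this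
        rw [hv1 y δ₂] at this
        exact max_lt_iff.mp this
      have cα1 : 0 < Q μ₁ δ₁ (-α) y ∧ 0 < Q μ₂ δ₁ (-α) y := by
        have := hneg 3
        rw [hvmap] at this
        simp only [show ((3:Fin 5)) = (((1:Fin 3)).succ).succ from rfl] at this
        simp only [Matrix.cons_val_succ, Matrix.cons_val_one, Matrix.head_cons,
          Matrix.cons_val_zero] at this
        rw [hv3 y δ₁] at this
        have : 0 < min (Q μ₁ δ₁ (-α) y) (Q μ₂ δ₁ (-α) y) := by linarith
        exact lt_min_iff.mp this
      have cα2 : 0 < Q μ₁ δ₂ (-α) y ∧ 0 < Q μ₂ δ₂ (-α) y := by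
        have := hneg 4
        rw [hvmap] at this
        simp only [show ((4:Fin 5)) = ((((1:Fin 2)).succ).succ).succ from rfl] at this
        simp only [Matrix.cons_val_succ, Matrix.cons_val_one, Matrix.head_cons,
          Matrix.cons_val_zero] at this
        rw [hv3 y δ₂] at this
        have : 0 < min (Q μ₁ δ₂ (-α) y) (Q μ₂ δ₂ (-α) y) := by linarith
        exact lt_min_iff.mp this
      -- y.2 ≠ 0
      have ht : y.2 ≠ 0 := by
        intro h
        have e : Q μ₁ δ₁ (-β) y = Q μ₁ δ₁ (-α) y := by
          simp [hQ, qf, h]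
        linarith [cβ1.1, cα1.1, e]
      -- build a witness for (a), contradicting hEx
      apply hEx
      refine ⟨y.2⁻¹ • y.1, ?_, ?_⟩
      · have e1 : (1 / 2) * ((y.2⁻¹ • y.1) ⬝ᵥ (A *ᵥ (y.2⁻¹ • y.1))) + a ⬝ᵥ (y.2⁻¹ • y.1) + γ
            = qf A a γ (y.2⁻¹ • y.1, 1) := by
          simp [qf]
        rw [e1, qf_scale A a γ y ht]
        exact mul_neg_of_pos_of_neg (pow_two_pos_of_ne_zero (inv_ne_zero ht)) c0
      · intro μ hμm δ hδm
        -- interpolation in μ then δ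
        have hμlt : ∀ δ' c', Q μ₁ δ' c' y < 0 → Q μ₂ δ' c' y < 0 → Q μ δ' c' y < 0 := by
          intro δ' c' h1 h2
          have hform : ∀ ν : ℝ, Q ν δ' c' y
              = qf B₁ (b₁ + δ' • b₂) c' y + ν * ((1/2) * (y.1 ⬝ᵥ (B₂ *ᵥ y.1))) := by
            intro ν; simp only [hQ]; rw [qf_affine_mu]
          rw [hform]
          exact aux_affine_lt hμm.1 hμm.2 (by rw [← hform μ₁]; exact h1)
            (by rw [← hform μ₂]; exact h2)
        have hμgt : ∀ δ' c', 0 < Q μ₁ δ' c' y → 0 < Q μ₂ δ' c' y → 0 < Q μ δ' c' y := by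
          intro δ' c' h1 h2
          have hform : ∀ ν : ℝ, Q ν δ' c' y
              = qf B₁ (b₁ + δ' • b₂) c' y + ν * ((1/2) * (y.1 ⬝ᵥ (B₂ *ᵥ y.1))) := by
            intro ν; simp only [hQ]; rw [qf_affine_mu]
          rw [hform]
          exact aux_affine_gt hμm.1 hμm.2 (by rw [← hform μ₁]; exact h1)
            (by rw [← hform μ₂]; exact h2)
        have hδform : ∀ δ' c', Q μ δ' c' y
            = qf (B₁ + μ • B₂) b₁ c' y + δ' * (y.2 * (b₂ ⬝ᵥ y.1)) := by
          intro δ' c'; simp only [hQ]; rw [qf_affine_delta]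
        have hβfin : Q μ δ (-β) y < 0 := by
          rw [hδform]
          exact aux_affine_lt hδm.1 hδm.2
            (by rw [← hδform δ₁]; exact hμlt δ₁ (-β) cβ1.1 cβ1.2)
            (by rw [← hδform δ₂]; exact hμlt δ₂ (-β) cβ2.1 cβ2.2)
        have hαfin : 0 < Q μ δ (-α) y := by
          rw [hδform]
          exact aux_affine_gt hδm.1 hδm.2
            (by rw [← hδform δ₁]; exact hμgt δ₁ (-α) cα1.1 cα1.2)
            (by rw [← hδform δ₂]; exact hμgt δ₂ (-α) cα2.1 cα2.2)
        have eβ : (1 / 2) * ((y.2⁻¹ • y.1) ⬝ᵥ ((B₁ + μ • B₂) *ᵥ (y.2⁻¹ • y.1)))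
            + (b₁ + δ • b₂) ⬝ᵥ (y.2⁻¹ • y.1) - β
            = qf (B₁ + μ • B₂) (b₁ + δ • b₂) (-β) (y.2⁻¹ • y.1, 1) := by
          simp [qf]; ring
        have eα : (1 / 2) * ((y.2⁻¹ • y.1) ⬝ᵥ ((B₁ + μ • B₂) *ᵥ (y.2⁻¹ • y.1)))
            + (b₁ + δ • b₂) ⬝ᵥ (y.2⁻¹ • y.1) - α
            = qf (B₁ + μ • B₂) (b₁ + δ • b₂) (-α) (y.2⁻¹ • y.1, 1) := by
          simp [qf]; ring
        have hq2 : 0 < (y.2⁻¹)^2 := pow_two_pos_of_ne_zero (inv_ne_zero ht)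
        constructor
        · have := mul_pos hq2 (by simpa only [hQ] using hαfin)
          rw [← qf_scale _ _ _ y ht, ← eα] at this
          linarith
        · have := mul_neg_of_pos_of_neg hq2 (by simpa only [hQ] using hβfin)
          rw [← qf_scale _ _ _ y ht, ← eβ] at this
          linarith
    -- separation
    have horth : IsOpen {z : Fin 5 → ℝ | ∀ i, 0 < z i} := by
      have he : {z : Fin 5 → ℝ | ∀ i, 0 < z i} = ⋂ i, (fun z : Fin 5 → ℝ => z i) ⁻¹' Ioi 0 := by
        ext z; simp [Set.mem_iInter, Set.mem_preimage]
      rw [he]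
      exact isOpen_iInter_of_finite fun i => (continuous_apply i).isOpen_preimage _ isOpen_Ioi
    have hopen : IsOpen (OmegaW n A B₁ B₂ a b₁ b₂ γ α β μ₁ μ₂ δ₁ δ₂) := by
      rw [hΩ]; exact IsOpen.add_left horth
    obtain ⟨f, hf⟩ := geometric_hahn_banach_point_open hconv hopen h0notin
    have hfpos : ∀ y (z : Fin 5 → ℝ), (∀ i, 0 < z i) → 0 < f (vmap y + z) := by
      intro y z hz
      have hmem : vmap y + z ∈ OmegaW n A B₁ B₂ a b₁ b₂ γ α β μ₁ μ₂ δ₁ δ₂ := by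
        rw [hΩ]; exact Set.add_mem_add ⟨y, rfl⟩ hz
      have := hf _ hmem
      rwa [map_zero] at this
    set ones : Fin 5 → ℝ := fun _ => 1 with hones
    have hfv : ∀ y, 0 ≤ f (vmap y) := by
      intro y
      apply aux_nonneg (g := f ones)
      intro ε hε
      have h := hfpos y (fun _ => ε) (fun i => hε)
      have he : (fun _ : Fin 5 => ε) = ε • ones := by funext i; simp [hones]
      rwa [he, map_add, _root_.map_smul, smul_eq_mul] at h
    have hv00 : vmap ((0 : Fin n → ℝ), (0:ℝ)) = 0 := by
      funext i
      have hq00 : ∀ μ δ c, Q μ δ c ((0 : Fin n → ℝ), (0:ℝ)) = 0 := by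
        intro μ δ c; simp [hQ, qf]
      simp only [Pi.zero_apply]
      fin_cases i
      · show vmap ((0 : Fin n → ℝ), (0:ℝ)) 0 = 0
        rw [hv0]; simp [qf]
      · show vmap ((0 : Fin n → ℝ), (0:ℝ)) 1 = 0
        rw [hvmap]
        simp only [Matrix.cons_val_one, Matrix.head_cons]
        rw [hv1 ((0 : Fin n → ℝ), (0:ℝ)) δ₁, hq00, hq00]; simp
      · show vmap ((0 : Fin n → ℝ), (0:ℝ)) 2 = 0
        rw [hvmap]
        simp only [show ((2:Fin 5)) = ((1:Fin 4)).succ from rfl, Matrix.cons_val_succ,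
          Matrix.cons_val_one, Matrix.head_cons]
        rw [hv1 ((0 : Fin n → ℝ), (0:ℝ)) δ₂, hq00, hq00]; simp
      · show vmap ((0 : Fin n → ℝ), (0:ℝ)) 3 = 0
        rw [hvmap]
        simp only [show ((3:Fin 5)) = (((1:Fin 3)).succ).succ from rfl, Matrix.cons_val_succ,
          Matrix.cons_val_one, Matrix.head_cons]
        rw [hv3 ((0 : Fin n → ℝ), (0:ℝ)) δ₁, hq00, hq00]; simp
      · show vmap ((0 : Fin n → ℝ), (0:ℝ)) 4 = 0
        rw [hvmap]
        simp only [show ((4:Fin 5)) = ((((1:Fin 2)).succ).succ).succ from rfl,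
          Matrix.cons_val_succ, Matrix.cons_val_one, Matrix.head_cons]
        rw [hv3 ((0 : Fin n → ℝ), (0:ℝ)) δ₂, hq00, hq00]; simp
    have hfones : 0 < f ones := by
      have := hfpos ((0 : Fin n → ℝ), (0:ℝ)) ones (fun i => by norm_num [hones])
      rwa [hv00, zero_add] at this
    set cf : Fin 5 → ℝ := fun i => f (fun j => if i = j then 1 else 0) with hcf
    have hfz : ∀ z : Fin 5 → ℝ, f z = ∑ i, z i * cf i := by
      intro z
      conv_lhs => rw [pi_eq_sum_univ z]
      rw [map_sum]
      simp [hcf, smul_eq_mul]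
    have hcfnn : ∀ i, 0 ≤ cf i := by
      intro i
      apply aux_nonneg (g := f ones)
      intro ε hε
      have h := hfpos ((0 : Fin n → ℝ), (0:ℝ))
        ((fun j => if i = j then 1 else 0) + ε • ones) ?_
      · rw [hv00, zero_add, map_add, _root_.map_smul, smul_eq_mul] at h
        exact h
      · intro j
        by_cases hij : i = j <;> simp [hij, hones] <;> linarith
    -- entry lemmas
    have hE0 : ∀ y, vmap y 0 = qf A a γ y := hv0
    have hE1 : ∀ y, vmap y 1 = max (Q μ₁ δ₁ (-β) y) (Q μ₂ δ₁ (-β) y) := by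
      intro y; rw [hvmap]
      simp only [Matrix.cons_val_one, Matrix.head_cons]
      exact hv1 y δ₁
    have hE2 : ∀ y, vmap y 2 = max (Q μ₁ δ₂ (-β) y) (Q μ₂ δ₂ (-β) y) := by
      intro y; rw [hvmap]
      simp only [show ((2:Fin 5)) = ((1:Fin 4)).succ from rfl, Matrix.cons_val_succ,
        Matrix.cons_val_one, Matrix.head_cons]
      exact hv1 y δ₂
    have hE3 : ∀ y, vmap y 3 = -min (Q μ₁ δ₁ (-α) y) (Q μ₂ δ₁ (-α) y) := by
      intro y; rw [hvmap]
      simp only [show ((3:Fin 5)) = (((1:Fin 3)).succ).succ from rfl, Matrix.cons_val_succ,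
        Matrix.cons_val_one, Matrix.head_cons]
      exact congrArg Neg.neg (hv3 y δ₁)
    have hE4 : ∀ y, vmap y 4 = -min (Q μ₁ δ₂ (-α) y) (Q μ₂ δ₂ (-α) y) := by
      intro y; rw [hvmap]
      simp only [show ((4:Fin 5)) = ((((1:Fin 2)).succ).succ).succ from rfl,
        Matrix.cons_val_succ, Matrix.cons_val_one, Matrix.head_cons]
      exact congrArg Neg.neg (hv3 y δ₂)
    -- the two quadratic aggregates
    set Nfn : ((Fin n → ℝ) × ℝ) → ℝ := fun y =>
      cf 0 * qf A a γ y + cf 1 * Q μ₁ δ₁ (-β) y + cf 2 * Q μ₁ δ₂ (-β) y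
        - cf 3 * Q μ₂ δ₁ (-α) y - cf 4 * Q μ₂ δ₂ (-α) y with hNfn
    set Pfn : ((Fin n → ℝ) × ℝ) → ℝ := fun y =>
      cf 0 * qf A a γ y + cf 1 * Q μ₂ δ₁ (-β) y + cf 2 * Q μ₂ δ₂ (-β) y
        - cf 3 * Q μ₁ δ₁ (-α) y - cf 4 * Q μ₁ δ₂ (-α) y with hPfn
    have hkey : ∀ (δ c : ℝ) y, Q μ₂ δ c y = Q μ₁ δ c y + (μ₂ - μ₁) * sfn y := by
      intro δ c y
      simp only [hQ, hsfn]
      rw [qf_affine_mu, qf_affine_mu]; ring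
    have hfsum : ∀ y, f (vmap y) = cf 0 * vmap y 0 + cf 1 * vmap y 1 + cf 2 * vmap y 2
        + cf 3 * vmap y 3 + cf 4 * vmap y 4 := by
      intro y
      rw [hfz (vmap y), Fin.sum_univ_five]; ring
    have hPge : ∀ y, 0 ≤ sfn y → 0 ≤ Pfn y := by
      intro y hy
      have hd : 0 ≤ (μ₂ - μ₁) * sfn y := mul_nonneg (sub_nonneg.mpr hμ) hy
      have h0 := hfv y
      rw [hfsum y, hE0 y, hE1 y, hE2 y, hE3 y, hE4 y,
        max_eq_right (by rw [hkey δ₁ (-β) y]; linarith),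
        max_eq_right (by rw [hkey δ₂ (-β) y]; linarith),
        min_eq_left (by rw [hkey δ₁ (-α) y]; linarith),
        min_eq_left (by rw [hkey δ₂ (-α) y]; linarith)] at h0
      rw [hPfn]
      simp only []
      linarith
    have hNge : ∀ y, sfn y ≤ 0 → 0 ≤ Nfn y := by
      intro y hy
      have hd : (μ₂ - μ₁) * sfn y ≤ 0 := mul_nonpos_of_nonneg_of_nonpos (sub_nonneg.mpr hμ) hy
      have h0 := hfv y
      rw [hfsum y, hE0 y, hE1 y, hE2 y, hE3 y, hE4 y,
        max_eq_left (by rw [hkey δ₁ (-β) y]; linarith),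
        max_eq_left (by rw [hkey δ₂ (-β) y]; linarith),
        min_eq_right (by rw [hkey δ₁ (-α) y]; linarith),
        min_eq_right (by rw [hkey δ₂ (-α) y]; linarith)] at h0
      rw [hNfn]
      simp only []
      linarith
    -- quadratic expansion hypothesis
    have hquadNs : ∀ u w : (Fin n → ℝ) × ℝ, ∃ np sp : ℝ, ∀ aa bb : ℝ,
        Nfn (aa • u + bb • w) = aa^2 * Nfn u + aa*bb*np + bb^2 * Nfn w ∧
        sfn (aa • u + bb • w) = aa^2 * sfn u + aa*bb*sp + bb^2 * sfn w := by
      intro u w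
      refine ⟨cf 0 * ((1/2) * (u.1 ⬝ᵥ (A *ᵥ w.1)) + (1/2) * (w.1 ⬝ᵥ (A *ᵥ u.1))
          + u.2 * (a ⬝ᵥ w.1) + w.2 * (a ⬝ᵥ u.1) + 2*γ*u.2*w.2)
        + cf 1 * ((1/2) * (u.1 ⬝ᵥ ((B₁ + μ₁ • B₂) *ᵥ w.1))
            + (1/2) * (w.1 ⬝ᵥ ((B₁ + μ₁ • B₂) *ᵥ u.1))
            + u.2 * ((b₁ + δ₁ • b₂) ⬝ᵥ w.1) + w.2 * ((b₁ + δ₁ • b₂) ⬝ᵥ u.1) + 2*(-β)*u.2*w.2)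
        + cf 2 * ((1/2) * (u.1 ⬝ᵥ ((B₁ + μ₁ • B₂) *ᵥ w.1))
            + (1/2) * (w.1 ⬝ᵥ ((B₁ + μ₁ • B₂) *ᵥ u.1))
            + u.2 * ((b₁ + δ₂ • b₂) ⬝ᵥ w.1) + w.2 * ((b₁ + δ₂ • b₂) ⬝ᵥ u.1) + 2*(-β)*u.2*w.2)
        - cf 3 * ((1/2) * (u.1 ⬝ᵥ ((B₁ + μ₂ • B₂) *ᵥ w.1))
            + (1/2) * (w.1 ⬝ᵥ ((B₁ + μ₂ • B₂) *ᵥ u.1))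
            + u.2 * ((b₁ + δ₁ • b₂) ⬝ᵥ w.1) + w.2 * ((b₁ + δ₁ • b₂) ⬝ᵥ u.1) + 2*(-α)*u.2*w.2)
        - cf 4 * ((1/2) * (u.1 ⬝ᵥ ((B₁ + μ₂ • B₂) *ᵥ w.1))
            + (1/2) * (w.1 ⬝ᵥ ((B₁ + μ₂ • B₂) *ᵥ u.1))
            + u.2 * ((b₁ + δ₂ • b₂) ⬝ᵥ w.1) + w.2 * ((b₁ + δ₂ • b₂) ⬝ᵥ u.1) + 2*(-α)*u.2*w.2),
        (1/2) * (u.1 ⬝ᵥ (B₂ *ᵥ w.1)) + (1/2) * (w.1 ⬝ᵥ (B₂ *ᵥ u.1)), fun aa bb => ⟨?_, ?_⟩⟩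
      · simp only [hNfn, hQ]
        rw [qf_expand, qf_expand, qf_expand, qf_expand, qf_expand]
        ring
      · simp only [hsfn, Prod.fst_add, Prod.smul_fst, Matrix.mulVec_add, Matrix.mulVec_smul,
          dotProduct_add, add_dotProduct, dotProduct_smul, smul_dotProduct, smul_eq_mul]
        ring
    set K : ℝ := (μ₂ - μ₁) * (cf 1 + cf 2 + cf 3 + cf 4) with hK
    have hKnn : 0 ≤ K := by
      rw [hK]
      have := hcfnn 1; have := hcfnn 2; have := hcfnn 3; have := hcfnn 4
      apply mul_nonneg (sub_nonneg.mpr hμ); linarith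
    have hPNrel : ∀ y, Pfn y = Nfn y + K * sfn y := by
      intro y
      simp only [hPfn, hNfn, hK]
      rw [hkey δ₁ (-β) y, hkey δ₂ (-β) y, hkey δ₁ (-α) y, hkey δ₂ (-α) y]
      ring
    obtain ⟨t, htIcc, hty⟩ := aux_yuan Nfn Pfn sfn K hKnn hquadNs hPNrel hPge hNge
    -- choose the averaged δ's
    have hδbex : ∃ d ∈ Icc δ₁ δ₂, cf 1 * δ₁ + cf 2 * δ₂ = (cf 1 + cf 2) * d := by
      by_cases h12 : cf 1 + cf 2 = 0
      · have e1 : cf 1 = 0 := by linarith [hcfnn 1, hcfnn 2]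
        have e2 : cf 2 = 0 := by linarith [hcfnn 1, hcfnn 2]
        exact ⟨δ₁, ⟨le_refl _, hδ⟩, by rw [e1, e2]; ring⟩
      · have hpos : 0 < cf 1 + cf 2 :=
          lt_of_le_of_ne (by linarith [hcfnn 1, hcfnn 2]) (Ne.symm h12)
        refine ⟨(cf 1 * δ₁ + cf 2 * δ₂) / (cf 1 + cf 2), ⟨?_, ?_⟩, by field_simp⟩
        · rw [le_div_iff₀ hpos]; nlinarith [hcfnn 2, hδ]
        · rw [div_le_iff₀ hpos]; nlinarith [hcfnn 1, hδ]
    have hδaex : ∃ d ∈ Icc δ₁ δ₂, cf 3 * δ₁ + cf 4 * δ₂ = (cf 3 + cf 4) * d := by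
      by_cases h34 : cf 3 + cf 4 = 0
      · have e3 : cf 3 = 0 := by linarith [hcfnn 3, hcfnn 4]
        have e4 : cf 4 = 0 := by linarith [hcfnn 3, hcfnn 4]
        exact ⟨δ₁, ⟨le_refl _, hδ⟩, by rw [e3, e4]; ring⟩
      · have hpos : 0 < cf 3 + cf 4 :=
          lt_of_le_of_ne (by linarith [hcfnn 3, hcfnn 4]) (Ne.symm h34)
        refine ⟨(cf 3 * δ₁ + cf 4 * δ₂) / (cf 3 + cf 4), ⟨?_, ?_⟩, by field_simp⟩
        · rw [le_div_iff₀ hpos]; nlinarith [hcfnn 4, hδ]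
        · rw [div_le_iff₀ hpos]; nlinarith [hcfnn 3, hδ]
    obtain ⟨δb, hδbI, hδbEq⟩ := hδbex
    obtain ⟨δa, hδaI, hδaEq⟩ := hδaex
    have ht0 := htIcc.1
    have ht1 := htIcc.2
    refine ⟨![cf 0, cf 1 + cf 2, cf 3 + cf 4], ?_, ?_,
      (1-t)*μ₂ + t*μ₁, ⟨by nlinarith, by nlinarith⟩,
      (1-t)*μ₁ + t*μ₂, ⟨by nlinarith, by nlinarith⟩,
      δa, hδaI, δb, hδbI, by ring, ?_⟩
    · intro i
      fin_cases i
      · show (0:ℝ) ≤ cf 0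
        exact hcfnn 0
      · show (0:ℝ) ≤ cf 1 + cf 2
        have := hcfnn 1; have := hcfnn 2; linarith
      · show (0:ℝ) ≤ cf 3 + cf 4
        have := hcfnn 3; have := hcfnn 4; linarith
    · intro hcon
      have hc0 : cf 0 = 0 := congrFun hcon 0
      have hc12 : cf 1 + cf 2 = 0 := congrFun hcon 1
      have hc34 : cf 3 + cf 4 = 0 := congrFun hcon 2
      have hsum : f ones = cf 0 + cf 1 + cf 2 + cf 3 + cf 4 := by
        rw [hfz ones, Fin.sum_univ_five]
        simp only [hones]
        ring
      rw [hsum] at hfones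
      linarith
    · intro x
      have h := hty (x, (1:ℝ))
      have hid : cf 0 * ((1 / 2) * (x ⬝ᵥ (A *ᵥ x)) + a ⬝ᵥ x + γ)
          + (cf 1 + cf 2) * ((1 / 2) * (x ⬝ᵥ ((B₁ + ((1-t)*μ₁ + t*μ₂) • B₂) *ᵥ x))
              + (b₁ + δb • b₂) ⬝ᵥ x - β)
          + (cf 3 + cf 4) * (α - ((1 / 2) * (x ⬝ᵥ ((B₁ + ((1-t)*μ₂ + t*μ₁) • B₂) *ᵥ x))
              + (b₁ + δa • b₂) ⬝ᵥ x))
          = (1-t) * Nfn (x, (1:ℝ)) + t * Pfn (x, (1:ℝ)) := by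
        simp only [hNfn, hPfn, hQ, qf, Matrix.add_mulVec, Matrix.smul_mulVec,
          dotProduct_add, dotProduct_smul, add_dotProduct, smul_dotProduct, smul_eq_mul]
        linear_combination (b₂ ⬝ᵥ x) * hδaEq - (b₂ ⬝ᵥ x) * hδbEq
      simp only [Matrix.cons_val_zero, Matrix.cons_val_one, Matrix.head_cons,
        show ((2:Fin 3)) = ((1:Fin 2)).succ from rfl, Matrix.cons_val_succ]
      rw [ge_iff_le, hid]
      linarith
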